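/- Define β^{(6)} by the explicit rational moments β_{00}=14, β_{10}=7/2, β_{01}=−67/8, β_{20}=79/4, β_{11}=1055/16, β_{02}=18195/64, β_{30}=−67/8, β_{21}=−1935/32, β_{12}=−43115/128, β_{03}=−926695/512, β_{40}=1055/16, β_{31}=18195/64, β_{22}=336151/256, β_{13}=6407195/1024, β_{04}=124731423/4096. Let h(x,y) = x⁴ + 6x − (11/2)y − 14x² + (43/2)xy − (17/2)y² − x²y + (1/2)xy². Then the Riesz functional satisfies Λ_β(h) = β_{40} + 6β_{10} − (11/2)β_{01} − 14β_{20} + (43/2)β_{11} − (17/2)β_{02} − β_{21} + (1/2)β_{12} = −320081/256 ≠ 0. -/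

import Mathlib

open MeasureTheory MvPolynomial

/-- Index set for moments/monomials of degree at most `n`. -/
abbrev Idx (n : ℕ) := {p : Fin (n+1) × Fin (n+1) // (p.1 : ℕ) + (p.2 : ℕ) ≤ n}

/-- The moment matrix `M(n)` associated with the sequence `β`. -/
noncomputable def momentMatrix (n : ℕ) (β : ℕ → ℕ → ℝ) : Matrix (Idx n) (Idx n) ℝ :=
  fun p q => β ((p.1.1 : ℕ) + (q.1.1 : ℕ)) ((p.1.2 : ℕ) + (q.1.2 : ℕ))

/-- Coefficient vector of a bivariate polynomial, indexed by monomials of degree ≤ n. -/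
noncomputable def coeffVec (n : ℕ) (p : MvPolynomial (Fin 2) ℝ) : Idx n → ℝ :=
  fun q => p.coeff (Finsupp.single 0 (q.1.1 : ℕ) + Finsupp.single 1 (q.1.2 : ℕ))

/-- The algebraic variety of the moment matrix `M(n)`. -/
def variety (n : ℕ) (β : ℕ → ℕ → ℝ) : Set (ℝ × ℝ) :=
  {z | ∀ p : MvPolynomial (Fin 2) ℝ, p.totalDegree ≤ n →
     (momentMatrix n β).mulVec (coeffVec n p) = 0 → eval ![z.1, z.2] p = 0}

/-- `μ` is a representing measure for the degree-`2n` moment sequence `β`. -/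
def Represents (n : ℕ) (β : ℕ → ℕ → ℝ) (μ : Measure (ℝ × ℝ)) : Prop :=
  ∀ i j : ℕ, i + j ≤ 2 * n →
    Integrable (fun z : ℝ × ℝ => z.1 ^ i * z.2 ^ j) μ ∧
    β i j = ∫ z : ℝ × ℝ, z.1 ^ i * z.2 ^ j ∂μ

/-- The Riesz functional associated with `β`. -/
noncomputable def riesz (β : ℕ → ℕ → ℝ) (p : MvPolynomial (Fin 2) ℝ) : ℝ :=
  ∑ d ∈ p.support, p.coeff d * β (d 0) (d 1)

/-- The closed support of a measure on `ℝ²`. -/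
def msupport (μ : Measure (ℝ × ℝ)) : Set (ℝ × ℝ) :=
  {z | ∀ U : Set (ℝ × ℝ), IsOpen U → z ∈ U → μ U ≠ 0}

/-- The quartic `h(x,y) = x⁴ + 6x − (11/2)y − 14x² + (43/2)xy − (17/2)y² − x²y + (1/2)xy²`. -/
noncomputable def hpoly : MvPolynomial (Fin 2) ℝ :=
  X 0 ^ 4 + C 6 * X 0 - C (11/2) * X 1 - C 14 * X 0 ^ 2 + C (43/2) * X 0 * X 1
    - C (17/2) * X 1 ^ 2 - X 0 ^ 2 * X 1 + C (1/2) * X 0 * X 1 ^ 2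

lemma riesz_eq_total (β : ℕ → ℕ → ℝ) (p : MvPolynomial (Fin 2) ℝ) :
    riesz β p = Finsupp.linearCombination ℝ (fun d : Fin 2 →₀ ℕ => β (d 0) (d 1)) (AddMonoidAlgebra.coeffLinearEquiv ℝ p) := by
  simp [riesz, Finsupp.linearCombination_apply, Finsupp.sum, MvPolynomial.coeff, smul_eq_mul]
  rfl

lemma X_eq_monomial' (s : Fin 2) :
    (X s : MvPolynomial (Fin 2) ℝ) = monomial (Finsupp.single s 1) 1 := by
  rw [← X_pow_eq_monomial, pow_one]

lemma lc_monomial' (β : ℕ → ℕ → ℝ) (d : Fin 2 →₀ ℕ) (a : ℝ) :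
    Finsupp.linearCombination ℝ (fun d : Fin 2 →₀ ℕ => β (d 0) (d 1)) (AddMonoidAlgebra.coeffLinearEquiv ℝ (monomial d a))
      = a * β (d 0) (d 1) := by
  rw [← single_eq_monomial, AddMonoidAlgebra.coeffLinearEquiv_apply, AddMonoidAlgebra.coeff_single, Finsupp.linearCombination_single, smul_eq_mul]

lemma riesz_hpoly_eq (β : ℕ → ℕ → ℝ) :
    riesz β hpoly
      = β 4 0 + 6 * β 1 0 - (11/2) * β 0 1 - 14 * β 2 0 + (43/2) * β 1 1
        - (17/2) * β 0 2 - β 2 1 + (1/2) * β 1 2 := by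
  rw [riesz_eq_total]
  simp only [hpoly, X_pow_eq_monomial]
  simp only [X_eq_monomial', C_apply, monomial_mul, one_mul, mul_one, map_add, map_sub,
    lc_monomial', Finsupp.add_apply, Finsupp.single_apply]
  norm_num

/-- for the explicit moment sequence, `Λ_β(h) = −320081/256 ≠ 0`. -/
theorem riesz_hpoly_ne_zero (β : ℕ → ℕ → ℝ)
    (h00 : β 0 0 = 14) (h10 : β 1 0 = 7/2) (h01 : β 0 1 = -67/8)
    (h20 : β 2 0 = 79/4) (h11 : β 1 1 = 1055/16) (h02 : β 0 2 = 18195/64)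
    (h30 : β 3 0 = -67/8) (h21 : β 2 1 = -1935/32) (h12 : β 1 2 = -43115/128)
    (h03 : β 0 3 = -926695/512)
    (h40 : β 4 0 = 1055/16) (h31 : β 3 1 = 18195/64) (h22 : β 2 2 = 336151/256)
    (h13 : β 1 3 = 6407195/1024) (h04 : β 0 4 = 124731423/4096) :
    riesz β hpoly
      = β 4 0 + 6 * β 1 0 - (11/2) * β 0 1 - 14 * β 2 0 + (43/2) * β 1 1
        - (17/2) * β 0 2 - β 2 1 + (1/2) * β 1 2 ∧
    riesz β hpoly = -320081/256 ∧ riesz β hpoly ≠ 0 := by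
  have key := riesz_hpoly_eq β
  refine ⟨key, ?_, ?_⟩ <;>
    rw [key, h40, h10, h01, h20, h11, h02, h21, h12] <;> norm_num
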